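/- Let 𝓡 be the subring of ℤ[v^{±1}, z^{±1}] generated by v, v⁻¹, z and (v⁻¹ − v)z⁻¹, and let P(v,z) = (3 − 5v⁻² + 4v⁻⁴ − v⁻⁶) + (4 − 10v⁻² + 5v⁻⁴)z² + (1 − 6v⁻² + v⁻⁴)z⁴ − v⁻²z⁶ ∈ 𝓡. Then for every prime r ≥ 7, the element P(v,z) − P(v⁻¹,−z) does not lie in the ideal of 𝓡 generated by r and z^r. -/

import Mathlib

open LaurentPolynomial

/-- The Laurent polynomial ring `ℤ[v^{±1}, z^{±1}]`, with `z` the outer variable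
and `v` the inner variable. -/
abbrev LL : Type := LaurentPolynomial (LaurentPolynomial ℤ)

/-- The variable `v`. -/
noncomputable def vV : LL := C (T 1)

/-- The variable `v⁻¹`. -/
noncomputable def vVinv : LL := C (T (-1))

/-- The variable `z`. -/
noncomputable def zZ : LL := T 1

/-- The variable `z⁻¹`. -/
noncomputable def zZinv : LL := T (-1)

/-- The subring `𝓡` of `ℤ[v^{±1}, z^{±1}]` generated by `v`, `v⁻¹`, `z` and
`(v⁻¹ − v)z⁻¹`. -/
noncomputable def Rcal : Subring LL :=
  Subring.closure {vV, vVinv, zZ, (vVinv - vV) * zZinv}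

/-- The skein (Homflypt) polynomial `P(v,z)` of the knot `11_{388}`:
`(3 − 5v⁻² + 4v⁻⁴ − v⁻⁶) + (4 − 10v⁻² + 5v⁻⁴)z² + (1 − 6v⁻² + v⁻⁴)z⁴ − v⁻²z⁶`. -/
noncomputable def P11388 : LL :=
  C (3 - 5 * T (-2) + 4 * T (-4) - T (-6))
    + C (4 - 10 * T (-2) + 5 * T (-4)) * T 2
    + C (1 - 6 * T (-2) + T (-4)) * T 4
    - C (T (-2)) * T 6

/-- `P(v⁻¹, −z)`, the image of `P11388` under the ring automorphism
`v ↦ v⁻¹`, `z ↦ −z` (all powers of `z` occurring are even, so only `v`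
gets inverted). -/
noncomputable def P11388' : LL :=
  C (3 - 5 * T 2 + 4 * T 4 - T 6)
    + C (4 - 10 * T 2 + 5 * T 4) * T 2
    + C (1 - 6 * T 2 + T 4) * T 4
    - C (T 2) * T 6

/-! ### Auxiliary definitions and lemmas -/

/-- `w = v⁻¹ - v` in the inner Laurent ring. -/
noncomputable def wP : LaurentPolynomial ℤ := T (-1) - T 1

/-- The subring of elements `b` such that for every `k > 0`, the coefficient of `z^{-k}`
in `b` is divisible by `w^k`. -/
noncomputable def Sset : Subring LL where
  carrier := {b : LL | ∀ m : ℤ, m < 0 → wP ^ (-m).toNat ∣ b.coeff m}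
  zero_mem' := by
    intro m hm
    show wP ^ (-m).toNat ∣ (0 : LL).coeff m
    simp
  one_mem' := by
    intro m hm
    show wP ^ (-m).toNat ∣ (1 : LL).coeff m
    rw [AddMonoidAlgebra.one_def, AddMonoidAlgebra.coeff_single, Finsupp.single_apply, if_neg (by omega)]
    exact dvd_zero _
  add_mem' := by
    intro f g hf hg m hm
    show wP ^ (-m).toNat ∣ (f + g).coeff m
    rw [AddMonoidAlgebra.coeff_add, Finsupp.add_apply]
    exact dvd_add (hf m hm) (hg m hm)
  neg_mem' := by
    intro f hf m hm
    show wP ^ (-m).toNat ∣ (-f).coeff m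
    rw [AddMonoidAlgebra.coeff_neg, Finsupp.neg_apply]
    exact (dvd_neg).mpr (hf m hm)
  mul_mem' := by
    intro f g hf hg m hm
    show wP ^ (-m).toNat ∣ (f * g).coeff m
    classical
    rw [AddMonoidAlgebra.coeff_mul]
    unfold Finsupp.sum
    refine Finset.dvd_sum fun a₁ _ => Finset.dvd_sum fun a₂ _ => ?_
    beta_reduce
    split_ifs with h
    · by_cases h₁ : a₁ < 0 <;> by_cases h₂ : a₂ < 0
      · rw [show (-m).toNat = (-a₁).toNat + (-a₂).toNat by omega, pow_add]
        exact mul_dvd_mul (hf a₁ h₁) (hg a₂ h₂)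
      · exact dvd_mul_of_dvd_left ((pow_dvd_pow wP (by omega)).trans (hf a₁ h₁)) _
      · exact dvd_mul_of_dvd_right ((pow_dvd_pow wP (by omega)).trans (hg a₂ h₂)) _
      · omega
    · exact dvd_zero _

lemma Rcal_le_Sset : Rcal ≤ Sset := by
  rw [Rcal]
  refine Subring.closure_le.mpr ?_
  rintro x hx
  simp only [Set.mem_insert_iff, Set.mem_singleton_iff] at hx
  rcases hx with rfl | rfl | rfl | rfl
  · intro m hm
    show wP ^ (-m).toNat ∣ vV.coeff m
    rw [vV, ← single_eq_C, AddMonoidAlgebra.coeff_single, Finsupp.single_apply, if_neg (by omega)]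
    exact dvd_zero _
  · intro m hm
    show wP ^ (-m).toNat ∣ vVinv.coeff m
    rw [vVinv, ← single_eq_C, AddMonoidAlgebra.coeff_single, Finsupp.single_apply, if_neg (by omega)]
    exact dvd_zero _
  · intro m hm
    show wP ^ (-m).toNat ∣ zZ.coeff m
    rw [zZ, T, AddMonoidAlgebra.coeff_single, Finsupp.single_apply, if_neg (by omega)]
    exact dvd_zero _
  · intro m hm
    show wP ^ (-m).toNat ∣ ((vVinv - vV) * zZinv).coeff m
    rw [show (vVinv - vV) * zZinv = AddMonoidAlgebra.single (-1 : ℤ) wP by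
      rw [vVinv, vV, zZinv, ← map_sub, ← single_eq_C_mul_T, wP]]
    rw [AddMonoidAlgebra.coeff_single, Finsupp.single_apply]
    split_ifs with h
    · rw [show (-m).toNat = 1 by omega, pow_one]
    · exact dvd_zero _

lemma coeff_C_mul_T (x : LaurentPolynomial ℤ) (n k : ℤ) :
    (C x * T n : LL).coeff k = if n = k then x else 0 := by
  rw [← single_eq_C_mul_T, AddMonoidAlgebra.coeff_single, Finsupp.single_apply]

lemma coeff_C' (x : LaurentPolynomial ℤ) (k : ℤ) :
    (C x : LL).coeff k = if 0 = k then x else 0 := by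
  rw [← single_eq_C, AddMonoidAlgebra.coeff_single, Finsupp.single_apply]

/-- The polynomial `v^6 · (c₀(v) - c₀(v⁻¹))` where `c₀` is the constant (in `z`)
coefficient of `P11388`. -/
noncomputable def C0 : Polynomial ℤ :=
  Polynomial.X^12 - 4*Polynomial.X^10 + 5*Polynomial.X^8 - 5*Polynomial.X^4
    + 4*Polynomial.X^2 - 1

/-- The cofactor of `(X-1)^5` in `C0`; its value at `1` is `64`. -/
noncomputable def S0 : Polynomial ℤ :=
  Polynomial.X^7 + 5*Polynomial.X^6 + 11*Polynomial.X^5 + 15*Polynomial.X^4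
    + 15*Polynomial.X^3 + 11*Polynomial.X^2 + 5*Polynomial.X + 1

lemma coeff_zero_sub :
    (P11388 - P11388').coeff (0:ℤ)
      = ((3 : LaurentPolynomial ℤ) - 5 * T (-2) + 4 * T (-4) - T (-6)) - (3 - 5 * T 2 + 4 * T 4 - T 6) := by
  rw [P11388, P11388']
  simp only [AddMonoidAlgebra.coeff_sub, AddMonoidAlgebra.coeff_add, Finsupp.sub_apply,
    Finsupp.add_apply, coeff_C', coeff_C_mul_T]
  norm_num

lemma hC0L : Polynomial.toLaurent C0
    = (((3 : LaurentPolynomial ℤ) - 5 * T (-2) + 4 * T (-4) - T (-6))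
        - (3 - 5 * T 2 + 4 * T 4 - T 6)) * T 6 := by
  rw [C0]
  simp only [map_sub, map_add, map_mul, map_one, map_ofNat, Polynomial.toLaurent_X_pow]
  rw [sub_mul, sub_mul]
  simp only [sub_mul, add_mul, mul_assoc, ← T_add]
  norm_num
  ring

lemma hwT : Polynomial.toLaurent ((1 : Polynomial ℤ) - Polynomial.X^2) = wP * T 1 := by
  simp only [map_sub, map_one, Polynomial.toLaurent_X_pow, wP]
  rw [sub_mul, ← T_add, ← T_add]
  norm_num

/-- The knot `11_{388}` is not `r`-periodic for any prime `r ≥ 7`: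
`P(v,z) − P(v⁻¹,−z)` does not lie in the ideal of `𝓡` generated by `r` and `z^r`. -/
theorem stmt_7 (r : ℕ) (hr : r.Prime) (hr7 : 7 ≤ r) :
    ¬ ∃ a b : LL, a ∈ Rcal ∧ b ∈ Rcal ∧
      P11388 - P11388' = (r : LL) * a + zZ ^ r * b := by
  rintro ⟨a, b, -, hbR, hEq⟩
  have hF := congrArg (fun q : LL => q.coeff (0:ℤ)) hEq
  -- compute the right-hand side coefficient
  have hR : ((r : LL) * a + zZ ^ r * b).coeff (0:ℤ)
      = (r : LaurentPolynomial ℤ) * a.coeff (0:ℤ) + b.coeff (-(r:ℤ)) := by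
    rw [AddMonoidAlgebra.coeff_add, Finsupp.add_apply]
    congr 1
    · rw [AddMonoidAlgebra.natCast_def, AddMonoidAlgebra.coeff_single_zero_mul]
    · rw [zZ, T_pow, mul_one, show (T (r:ℤ) : LL) = AddMonoidAlgebra.single (r:ℤ) 1 from rfl,
        AddMonoidAlgebra.coeff_single_mul_apply, one_mul, add_zero]
  -- divisibility of the coefficient of `z^{-r}` in `b`
  have hb' : wP ^ r ∣ b.coeff (-(r:ℤ)) := by
    have h := Rcal_le_Sset hbR (-(r:ℤ)) (by omega)
    rwa [neg_neg, Int.toNat_natCast] at h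
  obtain ⟨g, hg⟩ := hb'
  have key : ((3 : LaurentPolynomial ℤ) - 5 * T (-2) + 4 * T (-4) - T (-6))
      - (3 - 5 * T 2 + 4 * T 4 - T 6)
      = (r : LaurentPolynomial ℤ) * a.coeff (0:ℤ) + wP ^ r * g := by
    rw [← coeff_zero_sub, hF, hR, hg]
  -- pass to honest polynomials over ℤ
  obtain ⟨n₁, a', ha'⟩ := exists_T_pow (a.coeff (0:ℤ))
  obtain ⟨n₂, g', hg'⟩ := exists_T_pow g
  have hC0 : Polynomial.toLaurent C0
      = (((3 : LaurentPolynomial ℤ) - 5 * T (-2) + 4 * T (-4) - T (-6))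
          - (3 - 5 * T 2 + 4 * T 4 - T 6)) * T 6 := hC0L
  have key2 : C0 * Polynomial.X^(n₁+n₂+r)
      = (r : Polynomial ℤ) * a' * Polynomial.X^(n₂+6+r)
        + (1 - Polynomial.X^2)^r * g' * Polynomial.X^(n₁+6) := by
    have hw2 : Polynomial.toLaurent ((1 - Polynomial.X^2 : Polynomial ℤ) ^ r)
        = wP ^ r * T (r:ℤ) := by
      rw [map_pow, hwT, mul_pow, T_pow, show ((r:ℕ):ℤ)*1 = (r:ℤ) by ring]
    apply Polynomial.toLaurent_injective
    rw [map_mul, map_add, map_mul, map_mul, map_mul, map_mul, hw2,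
      Polynomial.toLaurent_X_pow, Polynomial.toLaurent_X_pow, Polynomial.toLaurent_X_pow,
      map_natCast, hC0, ha', hg', key]
    push_cast
    simp only [← T_add, mul_assoc, mul_comm, mul_left_comm, add_mul]
    ring_nf
    simp only [← T_add, mul_assoc, mul_comm, mul_left_comm]
    ring_nf
    congr 1
    rw [show (r : LaurentPolynomial ℤ) * a.coeff (0:ℤ) * T (n₁:ℤ) * T (6 + (n₂:ℤ) + ↑r)
        = (r : LaurentPolynomial ℤ) * a.coeff (0:ℤ) * (T (n₁:ℤ) * T (6 + (n₂:ℤ) + ↑r)) by ring,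
      ← T_add]
    ring_nf
  -- reduce mod `r` and derive a contradiction
  haveI : Fact r.Prime := ⟨hr⟩
  set f := Int.castRingHom (ZMod r) with hf
  have keym := congrArg (Polynomial.map f) key2
  simp only [Polynomial.map_mul, Polynomial.map_add, Polynomial.map_pow, Polynomial.map_sub,
    Polynomial.map_one, Polynomial.map_X, Polynomial.map_natCast] at keym
  rw [show ((r:ℕ) : Polynomial (ZMod r)) = 0 by
      rw [← Polynomial.C_eq_natCast, ZMod.natCast_self, map_zero], zero_mul, zero_mul,
    zero_add] at keym
  have hfac : C0.map f = (Polynomial.X - 1)^5 * (S0.map f) := by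
    rw [show C0 = (Polynomial.X - 1)^5 * S0 by rw [C0, S0]; ring]
    simp only [Polynomial.map_mul, Polynomial.map_pow, Polynomial.map_sub, Polynomial.map_one,
      Polynomial.map_X]
  have hdvd1 : ((Polynomial.X : Polynomial (ZMod r)) - 1) ∣ (1 - Polynomial.X^2) :=
    ⟨-1 - Polynomial.X, by ring⟩
  have hdvd : ((Polynomial.X : Polynomial (ZMod r)) - 1)^r ∣ C0.map f * Polynomial.X^(n₁+n₂+r) := by
    rw [keym]
    exact dvd_mul_of_dvd_left (dvd_mul_of_dvd_left (pow_dvd_pow_of_dvd hdvd1 r) _) _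
  rw [hfac, mul_assoc] at hdvd
  have hdvd5 : ((Polynomial.X : Polynomial (ZMod r)) - 1)^5
        * ((Polynomial.X : Polynomial (ZMod r)) - 1)^(r-5)
      ∣ (Polynomial.X - 1)^5 * ((S0.map f) * Polynomial.X^(n₁+n₂+r)) := by
    rw [← pow_add, show 5 + (r-5) = r by omega]; exact hdvd
  have hXne : ((Polynomial.X : Polynomial (ZMod r)) - 1) ≠ 0 := by
    rw [show (1 : Polynomial (ZMod r)) = Polynomial.C 1 from (Polynomial.C_1).symm]
    exact Polynomial.X_sub_C_ne_zero 1
  have h2 : ((Polynomial.X : Polynomial (ZMod r)) - 1)^(r-5)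
      ∣ (S0.map f) * Polynomial.X^(n₁+n₂+r) :=
    (mul_dvd_mul_iff_left (pow_ne_zero 5 hXne)).mp hdvd5
  have h3 : ((Polynomial.X : Polynomial (ZMod r)) - 1)
      ∣ (S0.map f) * Polynomial.X^(n₁+n₂+r) :=
    dvd_trans (dvd_pow_self _ (by omega : r - 5 ≠ 0)) h2
  obtain ⟨t, ht⟩ := h3
  have heval := congrArg (Polynomial.eval (1 : ZMod r)) ht
  have hS1 : (S0.map f).eval 1 = (64 : ZMod r) := by
    rw [Polynomial.eval_one_map]
    rw [show S0.eval 1 = (64:ℤ) by rw [S0]; norm_num]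
    simp [hf]
  simp only [Polynomial.eval_mul, Polynomial.eval_pow, Polynomial.eval_one, Polynomial.eval_sub,
    Polynomial.eval_X, one_pow, mul_one, sub_self, zero_mul, hS1] at heval
  have h64 : ((64:ℕ) : ZMod r) = 0 := by exact_mod_cast heval
  rw [ZMod.natCast_eq_zero_iff] at h64
  have hrd : r ∣ 2 := hr.dvd_of_dvd_pow (n := 6) ((by norm_num : (2:ℕ)^6 = 64) ▸ h64)
  have := Nat.le_of_dvd (by norm_num) hrd
  omega
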